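/- Let f_1,…,f_k : {0,1} → ℝ≥0 and let g : {0,1}^k → ℝ≥0 be log-supermodular. If g(x^1,…,x^k) ≤ ∏_{i=1}^k f_i(z^i(x^1,…,x^k)) for all x^1,…,x^k ∈ {0,1}, then ∑_{x^1,…,x^k ∈ {0,1}} g(x^1,…,x^k) ≤ ∏_{i=1}^k (f_i(0) + f_i(1)). -/

import Mathlib

open scoped NNReal

/-- `zscal x i` is the `(i+1)`-st largest (1-indexed) among the scalars `x 0, …, x (k-1)`;
i.e. it is `true` iff at least `i+1` of these values are `true`. -/
def zscal {k : ℕ} (x : Fin k → Bool) (i : Fin k) : Bool :=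
  decide ((i : ℕ) + 1 ≤ (Finset.univ.filter (fun a : Fin k => x a = true)).card)

namespace LSM
open Finset


variable {k : ℕ}

def passL (s : Fin k → Bool) : List (Fin k → Bool) → List (Fin k → Bool)
  | [] => []
  | y :: l => (s ⊓ y) :: passL (s ⊔ y) l

def supL (s : Fin k → Bool) : List (Fin k → Bool) → (Fin k → Bool)
  | [] => s
  | y :: l => supL (s ⊔ y) l

@[simp] lemma length_passL (s : Fin k → Bool) (l : List (Fin k → Bool)) :
    (passL s l).length = l.length := by
  induction l generalizing s with
  | nil => rfl
  | cons y l ih => simp [passL, ih]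

def sortL : List (Fin k → Bool) → List (Fin k → Bool)
  | [] => []
  | x :: l => supL x l :: sortL (passL x l)
  termination_by l => l.length
  decreasing_by simp

def cnt (c : Fin k) (l : List (Fin k → Bool)) : ℕ := l.countP (fun v => v c)

@[simp] lemma cnt_nil (c : Fin k) : cnt c [] = 0 := rfl

lemma cnt_cons (c : Fin k) (y : Fin k → Bool) (l : List (Fin k → Bool)) :
    cnt c (y :: l) = cnt c l + (if y c then 1 else 0) := by
  simp [cnt, List.countP_cons]

lemma cnt_passL (s : Fin k → Bool) (l : List (Fin k → Bool)) (c : Fin k) :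
    cnt c (passL s l) + (if supL s l c then 1 else 0)
      = cnt c l + (if s c then 1 else 0) := by
  induction l generalizing s with
  | nil => cases hs : s c <;> simp [passL, supL, hs]
  | cons y l ih =>
    simp only [passL, supL, cnt_cons]
    have := ih (s ⊔ y)
    have hsy : ((s ⊔ y) c : Bool) = (s c || y c) := rfl
    have hiy : ((s ⊓ y) c : Bool) = (s c && y c) := rfl
    by_cases hb : supL (s ⊔ y) l c = true <;> cases hs : s c <;> cases hy : y c <;>
      simp [hsy, hiy, hs, hy, hb] at this ⊢ <;> omega

lemma supL_apply (s : Fin k → Bool) (l : List (Fin k → Bool)) (c : Fin k) :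
    supL s l c = (s c || decide (0 < cnt c l)) := by
  induction l generalizing s with
  | nil => simp [supL]
  | cons y l ih =>
    have hsy : ((s ⊔ y) c : Bool) = (s c || y c) := rfl
    rw [supL, ih, cnt_cons, hsy]
    cases hy : y c <;> cases hs : s c <;> simp

lemma supL_head (x : Fin k → Bool) (l : List (Fin k → Bool)) (c : Fin k) :
    supL x l c = decide (0 < cnt c (x :: l)) := by
  rw [supL_apply, cnt_cons]
  cases hx : x c <;> simp

lemma sortL_eq_ofFn : ∀ n (l : List (Fin k → Bool)), l.length = n →
    sortL l = List.ofFn (fun j : Fin n => fun c => decide ((j : ℕ) < cnt c l)) := by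
  intro n
  induction n with
  | zero => intro l hl; rw [List.length_eq_zero_iff] at hl; subst hl; simp [sortL]
  | succ n ih =>
    intro l hl
    cases l with
    | nil => simp at hl
    | cons x l =>
      rw [sortL, List.ofFn_succ]
      have hlen : (passL x l).length = n := by simpa using Nat.succ_injective hl
      congr 1
      · funext c
        exact supL_head x l c
      · rw [ih (passL x l) hlen]
        congr 1
        funext j c
        have h3 : cnt c (passL x l) + (if 0 < cnt c (x :: l) then 1 else 0)
            = cnt c (x :: l) := by
          have h1 := cnt_passL x l c
          rw [supL_head x l c] at h1
          simp only [decide_eq_true_eq] at h1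
          rw [← cnt_cons] at h1
          exact h1
        simp only [Fin.val_succ, decide_eq_decide]
        split_ifs at h3 <;> omega

lemma prod_passL (g : (Fin k → Bool) → ℝ≥0)
    (hg : ∀ x y : Fin k → Bool, g x * g y ≤ g (x ⊓ y) * g (x ⊔ y))
    (s : Fin k → Bool) (l : List (Fin k → Bool)) :
    g s * (l.map g).prod ≤ g (supL s l) * ((passL s l).map g).prod := by
  induction l generalizing s with
  | nil => simp [passL, supL]
  | cons y l ih =>
    simp only [List.map_cons, List.prod_cons, passL, supL]
    calc g s * (g y * (l.map g).prod) = (g s * g y) * (l.map g).prod := by ring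
    _ ≤ (g (s ⊓ y) * g (s ⊔ y)) * (l.map g).prod := mul_le_mul_left (hg s y) _
    _ = g (s ⊓ y) * (g (s ⊔ y) * (l.map g).prod) := by ring
    _ ≤ g (s ⊓ y) * (g (supL (s ⊔ y) l) * ((passL (s ⊔ y) l).map g).prod) :=
        mul_le_mul_right (ih (s ⊔ y)) _
    _ = g (supL (s ⊔ y) l) * (g (s ⊓ y) * ((passL (s ⊔ y) l).map g).prod) := by ring

lemma prod_sortL (g : (Fin k → Bool) → ℝ≥0)
    (hg : ∀ x y : Fin k → Bool, g x * g y ≤ g (x ⊓ y) * g (x ⊔ y))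
    (l : List (Fin k → Bool)) :
    (l.map g).prod ≤ ((sortL l).map g).prod := by
  suffices H : ∀ n (l : List (Fin k → Bool)), l.length = n →
      (l.map g).prod ≤ ((sortL l).map g).prod from H _ l rfl
  intro n
  induction n with
  | zero => intro l hl; rw [List.length_eq_zero_iff] at hl; subst hl; simp [sortL]
  | succ n ih =>
    intro l hl
    cases l with
    | nil => simp at hl
    | cons x l =>
      rw [sortL]
      simp only [List.map_cons, List.prod_cons]
      calc g x * (l.map g).prod ≤ g (supL x l) * ((passL x l).map g).prod :=
            prod_passL g hg x l
      _ ≤ g (supL x l) * (((sortL (passL x l)).map g)).prod := by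
            refine mul_le_mul_right (ih (passL x l) ?_) _
            simpa using Nat.succ_injective hl



/-- number of coordinates with count exceeding t -/
def Acnt (ν : Fin k → ℕ) (t : ℕ) : ℕ := (univ.filter fun c : Fin k => t < ν c).card

/-- `aF N ν i` : the number of indices `j < N` such that the `(i+1)`-st largest count
exceeds `j`; equals the `(i+1)`-st largest value of `ν`. -/
def aF (N : ℕ) (ν : Fin k → ℕ) (i : Fin k) : ℕ :=
  (univ.filter fun j : Fin N => (i : ℕ) < Acnt ν (j : ℕ)).card

lemma cardlt (M m : ℕ) : (univ.filter fun i : Fin M => (i : ℕ) < m).card = min m M := by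
  rw [Finset.card_filter, Fin.sum_univ_eq_sum_range (fun j => if j < m then 1 else 0)]
  rw [← Finset.card_filter]
  have : (Finset.range M).filter (· < m) = Finset.range (min m M) := by
    ext j; simp only [mem_filter, mem_range, lt_min_iff]; omega
  rw [this, Finset.card_range]

lemma Acnt_le (ν : Fin k → ℕ) (t : ℕ) : Acnt ν t ≤ k := by
  simpa [Acnt] using Finset.card_le_card (Finset.filter_subset _ (univ : Finset (Fin k)))

lemma Acnt_antitone (ν : Fin k → ℕ) {t t' : ℕ} (h : t ≤ t') : Acnt ν t' ≤ Acnt ν t :=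
  Finset.card_le_card (by
    intro c hc
    simp only [mem_filter, mem_univ, true_and] at hc ⊢
    omega)

lemma aF_le (N : ℕ) (ν : Fin k → ℕ) (i : Fin k) : aF N ν i ≤ N := by
  simpa [aF] using Finset.card_le_card (Finset.filter_subset _ (univ : Finset (Fin N)))

lemma aF_gt_iff {N : ℕ} (ν : Fin k → ℕ) (i : Fin k) {t : ℕ} (ht : t < N) :
    t < aF N ν i ↔ (i : ℕ) < Acnt ν t := by
  constructor
  · intro h
    by_contra hc
    push_neg at hc
    have hsub : (univ.filter fun j : Fin N => (i : ℕ) < Acnt ν (j : ℕ))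
        ⊆ univ.filter fun j : Fin N => (j : ℕ) < t := by
      intro j hj
      simp only [mem_filter, mem_univ, true_and] at hj ⊢
      by_contra hjt
      push_neg at hjt
      exact absurd (lt_of_lt_of_le hj (Acnt_antitone ν hjt)) (not_lt.2 hc)
    have := Finset.card_le_card hsub
    rw [cardlt] at this
    have : aF N ν i ≤ t := le_trans this (min_le_left _ _)
    omega
  · intro h
    have hsub : (univ.filter fun j : Fin N => (j : ℕ) < t + 1)
        ⊆ univ.filter fun j : Fin N => (i : ℕ) < Acnt ν (j : ℕ) := by
      intro j hj
      simp only [mem_filter, mem_univ, true_and] at hj ⊢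
      exact lt_of_lt_of_le h (Acnt_antitone ν (by omega))
    have := Finset.card_le_card hsub
    rw [cardlt] at this
    have hmin : min (t + 1) N = t + 1 := by omega
    rw [hmin] at this
    exact lt_of_lt_of_le (Nat.lt_succ_self t) this

lemma card_gt_aF_eq (N : ℕ) (ν : Fin k → ℕ) (hν : ∀ c, ν c ≤ N) (t : ℕ) :
    (univ.filter fun i : Fin k => t < aF N ν i).card
      = (univ.filter fun c : Fin k => t < ν c).card := by
  rcases lt_or_ge t N with ht | ht
  · have : (univ.filter fun i : Fin k => t < aF N ν i)
        = univ.filter fun i : Fin k => (i : ℕ) < Acnt ν t := by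
      ext i; simp only [mem_filter, mem_univ, true_and]
      exact aF_gt_iff ν i ht
    rw [this, cardlt, min_eq_left (Acnt_le ν t)]
    rfl
  · have h1 : (univ.filter fun i : Fin k => t < aF N ν i) = ∅ := by
      apply Finset.filter_eq_empty_iff.2
      intro i _
      have := aF_le N ν i
      omega
    have h2 : (univ.filter fun c : Fin k => t < ν c) = ∅ := by
      apply Finset.filter_eq_empty_iff.2
      intro c _
      have := hν c
      omega
    rw [h1, h2]

/-- equal fibers -/
lemma card_eq_aF_eq (N : ℕ) (ν : Fin k → ℕ) (hν : ∀ c, ν c ≤ N) (v : ℕ) :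
    (univ.filter fun c : Fin k => ν c = v).card
      = (univ.filter fun i : Fin k => aF N ν i = v).card := by
  have key : ∀ (u : Fin k → ℕ), (univ.filter fun c : Fin k => u c = v).card
      = (univ.filter fun c : Fin k => v ≤ u c).card
        - (univ.filter fun c : Fin k => v < u c).card := by
    intro u
    have hdisj : Disjoint (univ.filter fun c : Fin k => u c = v)
        (univ.filter fun c : Fin k => v < u c) := by
      rw [Finset.disjoint_filter]
      intro c _ h1
      omega
    have hunion : (univ.filter fun c : Fin k => v ≤ u c)
        = (univ.filter fun c : Fin k => u c = v) ∪ (univ.filter fun c : Fin k => v < u c) := by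
      ext c
      simp only [mem_filter, mem_univ, true_and, mem_union]
      omega
    rw [hunion, Finset.card_union_of_disjoint hdisj]
    omega
  rw [key, key]
  have h1 : ∀ (u : Fin k → ℕ), (univ.filter fun c : Fin k => v ≤ u c).card
      = if v = 0 then k else (univ.filter fun c : Fin k => (v-1) < u c).card := by
    intro u
    rcases Nat.eq_zero_or_pos v with h | h
    · subst h; simp
    · rw [if_neg (by omega)]
      congr 1
      ext c
      simp only [mem_filter, mem_univ, true_and]
      omega
  rw [h1, h1]
  by_cases h : v = 0
  · subst h
    simp only [if_pos rfl]
    rw [card_gt_aF_eq N ν hν 0]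
  · simp only [if_neg h]
    rw [card_gt_aF_eq N ν hν (v-1), card_gt_aF_eq N ν hν v]




lemma prod_eq_of_fibers (N : ℕ) (F : ℕ → ℝ≥0) (u v : Fin k → ℕ)
    (hu : ∀ c, u c ≤ N) (hv : ∀ c, v c ≤ N)
    (hfib : ∀ m, (univ.filter fun c : Fin k => u c = m).card
      = (univ.filter fun c : Fin k => v c = m).card) :
    ∏ c, F (u c) = ∏ c, F (v c) := by
  have key : ∀ (w : Fin k → ℕ), (∀ c, w c ≤ N) →
      ∏ c, F (w c) = ∏ m ∈ Finset.range (N+1),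
        F m ^ (univ.filter fun c : Fin k => w c = m).card := by
    intro w hw
    rw [← Finset.prod_fiberwise_of_maps_to (g := w) (t := Finset.range (N+1))
      (fun c _ => Finset.mem_range.2 (by have := hw c; omega)) (fun c => F (w c))]
    apply Finset.prod_congr rfl
    intro m _
    have : ∀ c ∈ univ.filter fun c : Fin k => w c = m, F (w c) = F m := by
      intro c hc
      rw [(Finset.mem_filter.1 hc).2]
    rw [Finset.prod_congr rfl this, Finset.prod_const]
  rw [key u hu, key v hv]
  apply Finset.prod_congr rfl
  intro m _
  rw [hfib m]

lemma choose_term_le (N a : ℕ) (ha : a ≤ N) (u v : ℝ≥0) :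
    (N.choose a : ℝ≥0) * (u ^ a * v ^ (N - a)) ≤ (v + u) ^ N := by
  rw [add_comm v u, add_pow]
  calc (N.choose a : ℝ≥0) * (u ^ a * v ^ (N - a))
      = u ^ a * v ^ (N - a) * (N.choose a : ℝ≥0) := by ring
  _ ≤ ∑ m ∈ Finset.range (N+1), u ^ m * v ^ (N - m) * (N.choose m : ℝ≥0) := by
      exact Finset.single_le_sum (f := fun m => u ^ m * v ^ (N - m) * (N.choose m : ℝ≥0))
        (fun m _ => zero_le) (Finset.mem_range.2 (by omega))

lemma prod_bool_pow (N : ℕ) (u : Bool → ℝ≥0) (b : Fin N → Bool) :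
    ∏ j, u (b j) = u true ^ (univ.filter fun j => b j = true).card
      * u false ^ (N - (univ.filter fun j => b j = true).card) := by
  rw [← Finset.prod_filter_mul_prod_filter_not univ (fun j => b j = true) (fun j => u (b j))]
  have h1 : ∀ j ∈ univ.filter fun j : Fin N => b j = true, u (b j) = u true := by
    intro j hj; rw [(Finset.mem_filter.1 hj).2]
  have h2 : ∀ j ∈ univ.filter fun j : Fin N => ¬ (b j = true), u (b j) = u false := by
    intro j hj
    have := (Finset.mem_filter.1 hj).2
    rw [Bool.not_eq_true] at this
    rw [this]
  rw [Finset.prod_congr rfl h1, Finset.prod_congr rfl h2, Finset.prod_const, Finset.prod_const]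
  congr 2
  have := Finset.card_filter_add_card_filter_not (s := (univ : Finset (Fin N)))
    (p := fun j => b j = true)
  simp only [Finset.card_univ, Fintype.card_fin] at this
  omega


/-- column counts of a tuple -/
def nu (N : ℕ) (x : Fin N → Fin k → Bool) (c : Fin k) : ℕ :=
  (univ.filter fun j => x j c = true).card

lemma cnt_ofFn (N : ℕ) (x : Fin N → Fin k → Bool) (c : Fin k) :
    cnt c (List.ofFn x) = nu N x c := by
  induction N with
  | zero => simp [nu, cnt]
  | succ N ih =>
    rw [List.ofFn_succ, cnt_cons, ih]
    unfold nu
    rw [Finset.card_filter, Finset.card_filter, Fin.sum_univ_succ]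
    simp [add_comm]

lemma tuple_bound (f : Fin k → Bool → ℝ≥0) (g : (Fin k → Bool) → ℝ≥0)
    (hg : ∀ x y : Fin k → Bool, g x * g y ≤ g (x ⊓ y) * g (x ⊔ y))
    (hgf : ∀ x : Fin k → Bool, g x ≤ ∏ i : Fin k, f i (zscal x i))
    (N : ℕ) (x : Fin N → Fin k → Bool) :
    ∏ j, g (x j) ≤
      ∏ i, (f i true ^ aF N (nu N x) i * f i false ^ (N - aF N (nu N x) i)) := by
  set ν := nu N x with hν
  have h1 : ∏ j, g (x j) = ((List.ofFn x).map g).prod := by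
    rw [List.map_ofFn, List.prod_ofFn]
    rfl
  have h3 : sortL (List.ofFn x)
      = List.ofFn (fun j : Fin N => fun c => decide ((j : ℕ) < ν c)) := by
    rw [sortL_eq_ofFn N (List.ofFn x) (List.length_ofFn (f := x))]
    congr 1
    funext j c
    rw [cnt_ofFn]
  have h4 : ((sortL (List.ofFn x)).map g).prod
      = ∏ j : Fin N, g (fun c => decide ((j : ℕ) < ν c)) := by
    rw [h3, List.map_ofFn, List.prod_ofFn]
    rfl
  have h5 : ∏ j : Fin N, g (fun c => decide ((j : ℕ) < ν c))
      ≤ ∏ j : Fin N, ∏ i, f i (zscal (fun c => decide ((j : ℕ) < ν c)) i) :=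
    Finset.prod_le_prod' (fun j _ => hgf _)
  have h7 : ∀ (j : Fin N) (i : Fin k),
      zscal (fun c => decide ((j : ℕ) < ν c)) i = decide ((i : ℕ) < Acnt ν (j : ℕ)) := by
    intro j i
    unfold zscal Acnt
    have hfil : (univ.filter fun c : Fin k => (decide ((j : ℕ) < ν c)) = true)
        = univ.filter fun c : Fin k => (j : ℕ) < ν c := by
      apply Finset.filter_congr
      intro c _
      simp
    rw [hfil]
    simp only [decide_eq_decide]
    omega
  have h8 : ∀ i : Fin k, ∏ j : Fin N, f i (decide ((i : ℕ) < Acnt ν (j : ℕ)))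
      = f i true ^ aF N ν i * f i false ^ (N - aF N ν i) := by
    intro i
    rw [prod_bool_pow N (f i) (fun j => decide ((i : ℕ) < Acnt ν (j : ℕ)))]
    have hfil : (univ.filter fun j : Fin N => (decide ((i : ℕ) < Acnt ν (j : ℕ))) = true)
        = univ.filter fun j : Fin N => (i : ℕ) < Acnt ν (j : ℕ) := by
      apply Finset.filter_congr
      intro c _
      simp
    rw [hfil]
    rfl
  calc ∏ j, g (x j) = ((List.ofFn x).map g).prod := h1
  _ ≤ ((sortL (List.ofFn x)).map g).prod := prod_sortL g hg _
  _ = ∏ j : Fin N, g (fun c => decide ((j : ℕ) < ν c)) := h4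
  _ ≤ ∏ j : Fin N, ∏ i, f i (zscal (fun c => decide ((j : ℕ) < ν c)) i) := h5
  _ = ∏ i, ∏ j : Fin N, f i (zscal (fun c => decide ((j : ℕ) < ν c)) i) := Finset.prod_comm
  _ = ∏ i, (f i true ^ aF N ν i * f i false ^ (N - aF N ν i)) := by
      apply Finset.prod_congr rfl
      intro i _
      rw [← h8 i]
      apply Finset.prod_congr rfl
      intro j _
      rw [h7 j i]

lemma fiber_card (N : ℕ) (ν : Fin k → ℕ) :
    (univ.filter fun x : Fin N → Fin k → Bool => nu N x = ν).card
      = ∏ c, N.choose (ν c) := by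
  have hcard : (univ.filter fun x : Fin N → Fin k → Bool => nu N x = ν).card
      = (Fintype.piFinset fun c : Fin k =>
          (univ : Finset (Fin N)).powersetCard (ν c)).card := by
    apply Finset.card_bij' (fun x _ => fun c => univ.filter fun j => x j c = true)
      (fun M _ => fun j c => decide (j ∈ M c))
    · intro x _
      funext j c
      cases hx : x j c
      · simp [hx]
      · simp [hx]
    · intro M _
      funext c
      ext j
      simp
    · intro x hx
      rw [Fintype.mem_piFinset]
      intro c
      rw [Finset.mem_powersetCard]
      refine ⟨Finset.subset_univ _, ?_⟩
      have := (Finset.mem_filter.1 hx).2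
      exact congrFun this c
    · intro M hM
      rw [Finset.mem_filter]
      refine ⟨Finset.mem_univ _, ?_⟩
      funext c
      rw [Fintype.mem_piFinset] at hM
      have hMc := (Finset.mem_powersetCard.1 (hM c)).2
      rw [← hMc]
      unfold nu
      congr 1
      ext j
      simp
  rw [hcard, Fintype.card_piFinset]
  apply Finset.prod_congr rfl
  intro c _
  rw [Finset.card_powersetCard]
  simp

lemma le_of_pow_le (S R : ℝ≥0) (k : ℕ)
    (h : ∀ N : ℕ, S ^ N ≤ ((N + 1 : ℕ) : ℝ≥0) ^ k * R ^ N) : S ≤ R := by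
  by_contra hc
  push_neg at hc
  have hS : 0 < S := lt_of_le_of_lt zero_le hc
  set t : ℝ := (R : ℝ) / (S : ℝ) with hts
  have hS' : (0:ℝ) < S := by exact_mod_cast hS
  have ht0 : 0 ≤ t := div_nonneg R.coe_nonneg (le_of_lt hS')
  have ht1 : t < 1 := by
    rw [div_lt_one hS']
    exact_mod_cast hc
  have key : ∀ N : ℕ, (1 : ℝ) ≤ ((N + 1 : ℕ) : ℝ) ^ k * t ^ N := by
    intro N
    have hh := h N
    have hR : (S : ℝ) ^ N ≤ ((N + 1 : ℕ) : ℝ) ^ k * (R : ℝ) ^ N := by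
      exact_mod_cast hh
    have hSN : (0:ℝ) < (S:ℝ) ^ N := pow_pos hS' N
    rw [hts, div_pow, ← mul_div_assoc, le_div_iff₀ hSN, one_mul]
    exact hR
  rcases eq_or_lt_of_le ht0 with ht | ht
  · have h1 := key 1
    rw [← ht] at h1
    simp at h1
    linarith
  · have habs : |t| < 1 := by rw [abs_of_pos ht]; exact ht1
    have hsum : Summable (fun n : ℕ => (n : ℝ) ^ k * t ^ n) :=
      summable_pow_mul_geometric_of_norm_lt_one k (by simpa using habs)
    have htend : Filter.Tendsto (fun n : ℕ => (n : ℝ) ^ k * t ^ n)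
        Filter.atTop (nhds 0) := hsum.tendsto_atTop_zero
    have htend2 : Filter.Tendsto (fun N : ℕ => ((N + 1 : ℕ) : ℝ) ^ k * t ^ (N + 1))
        Filter.atTop (nhds 0) := htend.comp (Filter.tendsto_add_atTop_nat 1)
    have htend3 : Filter.Tendsto (fun N : ℕ => ((N + 1 : ℕ) : ℝ) ^ k * t ^ N)
        Filter.atTop (nhds 0) := by
      have := htend2.mul_const t⁻¹
      rw [zero_mul] at this
      convert this using 2 with N
      field_simp [pow_succ]
      ring
    have : (1 : ℝ) ≤ 0 := ge_of_tendsto htend3 (Filter.Eventually.of_forall key)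
    linarith

theorem main (f : Fin k → Bool → ℝ≥0) (g : (Fin k → Bool) → ℝ≥0)
    (hg : ∀ x y : Fin k → Bool, g x * g y ≤ g (x ⊓ y) * g (x ⊔ y))
    (hgf : ∀ x : Fin k → Bool, g x ≤ ∏ i : Fin k, f i (zscal x i)) :
    ∑ x : Fin k → Bool, g x ≤ ∏ i : Fin k, (f i false + f i true) := by
  set R : ℝ≥0 := ∏ i : Fin k, (f i false + f i true) with hR
  apply le_of_pow_le _ _ k
  intro N
  set Φ : (Fin k → ℕ) → ℝ≥0 :=
    fun ν => ∏ i, (f i true ^ aF N ν i * f i false ^ (N - aF N ν i)) with hΦ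
  have step1 : (∑ x : Fin k → Bool, g x) ^ N
      = ∑ x : Fin N → (Fin k → Bool), ∏ j, g (x j) := by
    rw [Finset.sum_pow' univ g N, Fintype.piFinset_univ]
  have step2 : ∑ x : Fin N → (Fin k → Bool), ∏ j, g (x j)
      ≤ ∑ x : Fin N → (Fin k → Bool), Φ (nu N x) :=
    Finset.sum_le_sum (fun x _ => tuple_bound f g hg hgf N x)
  set T : Finset (Fin k → ℕ) := Fintype.piFinset fun _ : Fin k => Finset.range (N+1)
    with hT
  have hmaps : ∀ x : Fin N → (Fin k → Bool), nu N x ∈ T := by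
    intro x
    rw [hT, Fintype.mem_piFinset]
    intro c
    rw [Finset.mem_range]
    have : nu N x c ≤ N := by
      simpa [nu] using Finset.card_le_card (Finset.filter_subset _ (univ : Finset (Fin N)))
    omega
  have step3 : ∑ x : Fin N → (Fin k → Bool), Φ (nu N x)
      = ∑ ν ∈ T, ((univ.filter fun x : Fin N → Fin k → Bool => nu N x = ν).card) • Φ ν := by
    rw [← Finset.sum_fiberwise_of_maps_to (fun x _ => hmaps x) (fun x => Φ (nu N x))]
    apply Finset.sum_congr rfl
    intro ν _
    rw [Finset.sum_congr rfl (fun x hx => by rw [(Finset.mem_filter.1 hx).2]),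
      Finset.sum_const]
  have step4 : ∀ ν ∈ T, ((univ.filter fun x : Fin N → Fin k → Bool => nu N x = ν).card) • Φ ν
      ≤ R ^ N := by
    intro ν hν
    have hνN : ∀ c, ν c ≤ N := by
      rw [hT, Fintype.mem_piFinset] at hν
      intro c
      have := Finset.mem_range.1 (hν c)
      omega
    rw [fiber_card N ν, nsmul_eq_mul, Nat.cast_prod]
    have hchoose : ∏ c, ((N.choose (ν c) : ℝ≥0)) = ∏ i, ((N.choose (aF N ν i) : ℝ≥0)) :=
      prod_eq_of_fibers N (fun m => (N.choose m : ℝ≥0)) ν (aF N ν) hνN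
        (fun i => aF_le N ν i) (fun m => card_eq_aF_eq N ν hνN m)
    rw [hchoose, hΦ, ← Finset.prod_mul_distrib, hR, ← Finset.prod_pow]
    exact Finset.prod_le_prod' fun i _ =>
      choose_term_le N (aF N ν i) (aF_le N ν i) (f i true) (f i false)
  calc (∑ x : Fin k → Bool, g x) ^ N
      = ∑ x : Fin N → (Fin k → Bool), ∏ j, g (x j) := step1
  _ ≤ ∑ x : Fin N → (Fin k → Bool), Φ (nu N x) := step2
  _ = ∑ ν ∈ T, ((univ.filter fun x : Fin N → Fin k → Bool => nu N x = ν).card) • Φ ν := step3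
  _ ≤ ∑ _ν ∈ T, R ^ N := Finset.sum_le_sum step4
  _ = (T.card : ℝ≥0) * R ^ N := by rw [Finset.sum_const, nsmul_eq_mul]
  _ = ((N + 1 : ℕ) : ℝ≥0) ^ k * R ^ N := by
      rw [hT, Fintype.card_piFinset]
      simp


end LSM

/-- Lemma 5 of the paper (the case `n = 1`): if `g : {0,1}ᵏ → ℝ≥0` is log-supermodular and
`g(x¹,…,xᵏ) ≤ ∏ᵢ fᵢ(zⁱ(x¹,…,xᵏ))` for all `x¹,…,xᵏ ∈ {0,1}`, then
`∑_{x¹,…,xᵏ} g(x¹,…,xᵏ) ≤ ∏ᵢ (fᵢ(0) + fᵢ(1))`. -/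
theorem sum_le_prod_of_logSupermodular_base {k : ℕ}
    (f : Fin k → Bool → ℝ≥0) (g : (Fin k → Bool) → ℝ≥0)
    (hg : ∀ x y : Fin k → Bool, g x * g y ≤ g (x ⊓ y) * g (x ⊔ y))
    (hgf : ∀ x : Fin k → Bool, g x ≤ ∏ i : Fin k, f i (zscal x i)) :
    ∑ x : Fin k → Bool, g x ≤ ∏ i : Fin k, (f i false + f i true) :=
  LSM.main f g hg hgf
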